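/- arXiv:1109.3623 — 3 statements merged into one kernel-verified Lean document; each statement's English description precedes it below -/
import Mathlib

section
/- The number of 2n×k matrices over F₂ of rank 1 which are vertical stacks of n persymmetric (Hankel) 2×k blocks — i.e. whose (2j-1)-th and (2j)-th rows are (α₁^{(j)},…,α_k^{(j)}) and (α₂^{(j)},…,α_{k+1}^{(j)}) for sequences α^{(j)} ∈ F₂^{k+1} — equals 3·(2ⁿ−1), provided k ≥ 2. -/
/-- The `2n × k` matrix over `F₂` built from `n` vectors `α⁽ʲ⁾ ∈ F₂^{k+1}`:
rows `2j` and `2j+1` (0-indexed) are the two consecutive length-`k` windows of `α⁽ʲ⁾`. -/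
def persMat (n k : ℕ) (α : Fin n → Fin (k+1) → ZMod 2) :
    Matrix (Fin (2*n)) (Fin k) (ZMod 2) :=
  fun i j => α ⟨i.val / 2, by have := i.isLt; omega⟩
               ⟨j.val + i.val % 2, by have := j.isLt; omega⟩

/-- `Gamma n k i` = number of `n`-times persymmetric `2n × k` matrices over `F₂` of rank `i`. -/
noncomputable def Gamma (n k i : ℕ) : ℕ :=
  Nat.card {α : Fin n → Fin (k+1) → ZMod 2 // (persMat n k α).rank = i}

namespace GammaRankOneAux

open Matrix Submodule Module

/-- rank-one characterization over `F₂`. -/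
lemma rank_one_iff {m k : ℕ} (M : Matrix (Fin m) (Fin k) (ZMod 2)) :
    M.rank = 1 ↔ ∃ v : Fin k → ZMod 2, v ≠ 0 ∧ (∀ i, M i = 0 ∨ M i = v) ∧ M ≠ 0 := by
  constructor
  · intro h
    have hM : M ≠ 0 := by
      rintro rfl
      rw [Matrix.rank_zero] at h
      exact one_ne_zero h.symm
    rw [Matrix.rank_eq_finrank_span_row] at h
    obtain ⟨v, hv0, hv⟩ := finrank_eq_one_iff'.mp h
    refine ⟨v.val, ?_, ?_, hM⟩
    · intro h; exact hv0 (Subtype.ext h)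
    · intro i
      have hi : M i ∈ Submodule.span (ZMod 2) (Set.range M) :=
        Submodule.subset_span (Set.mem_range_self i)
      obtain ⟨c, hc⟩ := hv ⟨M i, hi⟩
      have hc' : c • (v : Fin k → ZMod 2) = M i := congrArg Subtype.val hc
      have hall : ∀ d : ZMod 2, d = 0 ∨ d = 1 := by decide
      have : c = 0 ∨ c = 1 := hall c
      rcases this with rfl | rfl
      · left; simpa using hc'.symm
      · right; simpa using hc'.symm
  · rintro ⟨v, hv, hrows, hM⟩
    obtain ⟨i₀, hi₀⟩ := Function.ne_iff.mp hM
    have hrow : M i₀ = v := (hrows i₀).resolve_left hi₀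
    rw [Matrix.rank_eq_finrank_span_row]
    have hspan : Submodule.span (ZMod 2) (Set.range M) = Submodule.span (ZMod 2) {v} := by
      apply le_antisymm
      · rw [Submodule.span_le]
        rintro _ ⟨i, rfl⟩
        rcases hrows i with h | h <;> rw [h]
        · exact Submodule.zero_mem _
        · exact Submodule.mem_span_singleton_self v
      · rw [Submodule.span_le, Set.singleton_subset_iff]
        exact Submodule.subset_span ⟨i₀, hrow⟩
    rw [show Set.range M.row = Set.range M from rfl, hspan]
    exact finrank_span_singleton hv

variable {k : ℕ}

/-- first window -/
def w1 (a : Fin (k+1) → ZMod 2) : Fin k → ZMod 2 :=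
  fun t => a ⟨t.val, Nat.lt_succ_of_lt t.isLt⟩

/-- second window -/
def w2 (a : Fin (k+1) → ZMod 2) : Fin k → ZMod 2 :=
  fun t => a ⟨t.val + 1, Nat.succ_lt_succ t.isLt⟩

def E0 (k : ℕ) : Fin (k+1) → ZMod 2 := fun s => if s.val = 0 then 1 else 0
def Ek (k : ℕ) : Fin (k+1) → ZMod 2 := fun s => if s.val = k then 1 else 0
def On (k : ℕ) : Fin (k+1) → ZMod 2 := fun _ => 1
def V0 (k : ℕ) : Fin k → ZMod 2 := fun t => if t.val = 0 then 1 else 0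
def Vk (k : ℕ) : Fin k → ZMod 2 := fun t => if t.val = k - 1 then 1 else 0
def Von (k : ℕ) : Fin k → ZMod 2 := fun _ => 1

lemma app_congr {N : ℕ} (f : Fin N → ZMod 2) {m m' : ℕ} (h : m < N) (h' : m' < N)
    (e : m = m') : f ⟨m, h⟩ = f ⟨m', h'⟩ := by subst e; rfl

lemma funext_fin {N : ℕ} {f g : Fin N → ZMod 2}
    (h : ∀ m (hm : m < N), f ⟨m, hm⟩ = g ⟨m, hm⟩) : f = g :=
  funext fun s => h s.val s.isLt

lemma ne1 : ∀ d : ZMod 2, d ≠ 0 → d = 1 := by decide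

/-- the key block analysis -/
lemma block (hk : 2 ≤ k) {v : Fin k → ZMod 2} (hv : v ≠ 0)
    {a : Fin (k+1) → ZMod 2} (ha : a ≠ 0)
    (h1 : w1 a = 0 ∨ w1 a = v) (h2 : w2 a = 0 ∨ w2 a = v) :
    (a = E0 k ∧ v = V0 k) ∨ (a = Ek k ∧ v = Vk k) ∨ (a = On k ∧ v = Von k) := by
  rcases h1 with e1 | e1 <;> rcases h2 with e2 | e2
  · -- both windows zero : a = 0, contradiction
    exfalso; apply ha
    apply funext_fin; intro m hm
    rcases Nat.lt_or_ge m k with h | h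
    · exact congrFun e1 ⟨m, h⟩
    · have hmk : m = k := by omega
      have := congrFun e2 ⟨k-1, by omega⟩
      calc a ⟨m, hm⟩ = a ⟨(k-1)+1, by omega⟩ := app_congr a hm (by omega) (by omega)
        _ = 0 := this
  · -- (0, v) : a = Ek, v = Vk
    have A1 : ∀ m (hm : m < k), a ⟨m, by omega⟩ = 0 := fun m hm => congrFun e1 ⟨m, hm⟩
    have A2 : ∀ m (hm : m < k), a ⟨m+1, by omega⟩ = v ⟨m, hm⟩ := fun m hm => congrFun e2 ⟨m, hm⟩
    have vz : ∀ m (hm : m < k), m < k - 1 → v ⟨m, hm⟩ = 0 := by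
      intro m hm h1m
      rw [← A2 m hm]
      exact A1 (m+1) (by omega)
    have vk1 : v ⟨k-1, by omega⟩ = 1 := by
      apply ne1; intro h0
      apply hv; apply funext_fin; intro m hm
      rcases Nat.lt_or_ge m (k-1) with h | h
      · exact vz m hm h
      · have : m = k - 1 := by omega
        subst this; exact h0
    have ak : a ⟨k, by omega⟩ = 1 := by
      calc a ⟨k, by omega⟩ = a ⟨(k-1)+1, by omega⟩ := app_congr a (by omega) (by omega) (by omega)
        _ = v ⟨k-1, by omega⟩ := A2 (k-1) (by omega)
        _ = 1 := vk1
    right; left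
    constructor
    · apply funext_fin; intro m hm
      show a ⟨m, hm⟩ = if m = k then 1 else 0
      rcases Nat.lt_or_ge m k with h | h
      · rw [if_neg (by omega)]; exact A1 m h
      · have : m = k := by omega
        subst this; rw [if_pos rfl]; exact ak
    · apply funext_fin; intro m hm
      show v ⟨m, hm⟩ = if m = k - 1 then 1 else 0
      rcases Nat.lt_or_ge m (k-1) with h | h
      · rw [if_neg (by omega)]; exact vz m hm h
      · have : m = k - 1 := by omega
        subst this; rw [if_pos rfl]; exact vk1
  · -- (v, 0) : a = E0, v = V0
    have A1 : ∀ m (hm : m < k), a ⟨m, by omega⟩ = v ⟨m, hm⟩ := fun m hm => congrFun e1 ⟨m, hm⟩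
    have A2 : ∀ m (hm : m < k), a ⟨m+1, by omega⟩ = 0 := fun m hm => congrFun e2 ⟨m, hm⟩
    have az : ∀ m (hm : m < k + 1), 1 ≤ m → a ⟨m, hm⟩ = 0 := by
      intro m hm h1m
      calc a ⟨m, hm⟩ = a ⟨(m-1)+1, by omega⟩ := app_congr a hm (by omega) (by omega)
        _ = 0 := A2 (m-1) (by omega)
    have vz : ∀ m (hm : m < k), 1 ≤ m → v ⟨m, hm⟩ = 0 := by
      intro m hm h1m
      rw [← A1 m hm]
      exact az m (by omega) h1m
    have v0 : v ⟨0, by omega⟩ = 1 := by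
      apply ne1; intro h0
      apply hv; apply funext_fin; intro m hm
      rcases Nat.eq_zero_or_pos m with h | h
      · subst h; exact h0
      · exact vz m hm h
    left
    constructor
    · apply funext_fin; intro m hm
      show a ⟨m, hm⟩ = if m = 0 then 1 else 0
      rcases Nat.eq_zero_or_pos m with h | h
      · subst h; rw [if_pos rfl]
        exact (A1 0 (by omega)).trans v0
      · rw [if_neg (by omega)]; exact az m hm h
    · apply funext_fin; intro m hm
      show v ⟨m, hm⟩ = if m = 0 then 1 else 0
      rcases Nat.eq_zero_or_pos m with h | h
      · subst h; rw [if_pos rfl]; exact v0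
      · rw [if_neg (by omega)]; exact vz m hm h
  · -- (v, v) : a = On, v = Von
    have A1 : ∀ m (hm : m < k), a ⟨m, by omega⟩ = v ⟨m, hm⟩ := fun m hm => congrFun e1 ⟨m, hm⟩
    have A2 : ∀ m (hm : m < k), a ⟨m+1, by omega⟩ = v ⟨m, hm⟩ := fun m hm => congrFun e2 ⟨m, hm⟩
    have step : ∀ m (hm : m < k), a ⟨m+1, by omega⟩ = a ⟨m, by omega⟩ :=
      fun m hm => (A2 m hm).trans (A1 m hm).symm
    have const : ∀ m (hm : m < k + 1), a ⟨m, hm⟩ = a ⟨0, by omega⟩ := by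
      intro m
      induction m with
      | zero => intro hm; rfl
      | succ p ih =>
          intro hm
          rw [step p (by omega)]
          exact ih (by omega)
    have a0 : a ⟨0, by omega⟩ = 1 := by
      apply ne1; intro h0
      apply ha; apply funext_fin; intro m hm
      exact (const m hm).trans h0
    right; right
    constructor
    · apply funext_fin; intro m hm
      show a ⟨m, hm⟩ = 1
      exact (const m hm).trans a0
    · apply funext_fin; intro m hm
      show v ⟨m, hm⟩ = 1
      rw [← A1 m hm]
      exact (const m (by omega)).trans a0

variable {n : ℕ}

def Sset (n k : ℕ) (a : Fin (k+1) → ZMod 2) : Set (Fin n → Fin (k+1) → ZMod 2) :=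
  {α | (∀ j, α j = 0 ∨ α j = a) ∧ α ≠ 0}

lemma row_even (α : Fin n → Fin (k+1) → ZMod 2) (j : Fin n) (h : 2*j.val < 2*n) :
    persMat n k α ⟨2*j.val, h⟩ = w1 (α j) := by
  funext t
  show α ⟨2*j.val/2, by have := j.isLt; omega⟩ ⟨t.val + 2*j.val % 2, by have := t.isLt; omega⟩
      = α j ⟨t.val, Nat.lt_succ_of_lt t.isLt⟩
  have e1 : (⟨2*j.val/2, by have := j.isLt; omega⟩ : Fin n) = j := by
    apply Fin.ext; show 2*j.val/2 = j.val; omega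
  rw [e1]
  exact app_congr (α j) _ _ (by omega)

lemma row_odd (α : Fin n → Fin (k+1) → ZMod 2) (j : Fin n) (h : 2*j.val+1 < 2*n) :
    persMat n k α ⟨2*j.val+1, h⟩ = w2 (α j) := by
  funext t
  show α ⟨(2*j.val+1)/2, by have := j.isLt; omega⟩
        ⟨t.val + (2*j.val+1) % 2, by have := t.isLt; omega⟩
      = α j ⟨t.val + 1, Nat.succ_lt_succ t.isLt⟩
  have e1 : (⟨(2*j.val+1)/2, by have := j.isLt; omega⟩ : Fin n) = j := by
    apply Fin.ext; show (2*j.val+1)/2 = j.val; omega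
  rw [e1]
  exact app_congr (α j) _ _ (by omega)

lemma row_cases (α : Fin n → Fin (k+1) → ZMod 2) (i : Fin (2*n)) :
    ∃ j : Fin n, persMat n k α i = w1 (α j) ∨ persMat n k α i = w2 (α j) := by
  obtain ⟨iv, hiv⟩ := i
  rcases Nat.lt_or_ge (iv % 2) 1 with h | h
  · obtain ⟨q, rfl⟩ : ∃ q, iv = 2*q := ⟨iv/2, by omega⟩
    exact ⟨⟨q, by omega⟩, Or.inl (row_even α ⟨q, by omega⟩ hiv)⟩
  · obtain ⟨q, rfl⟩ : ∃ q, iv = 2*q+1 := ⟨iv/2, by omega⟩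
    exact ⟨⟨q, by omega⟩, Or.inr (row_odd α ⟨q, by omega⟩ hiv)⟩

lemma w1_zero : w1 (0 : Fin (k+1) → ZMod 2) = 0 := rfl
lemma w2_zero : w2 (0 : Fin (k+1) → ZMod 2) = 0 := rfl
lemma w1_E0 : w1 (E0 k) = V0 k := rfl
lemma w2_E0 : w2 (E0 k) = 0 := by
  apply funext_fin; intro m hm
  show (if m + 1 = 0 then (1:ZMod 2) else 0) = 0
  rw [if_neg (by omega)]
lemma w1_Ek : w1 (Ek k) = 0 := by
  apply funext_fin; intro m hm
  show (if m = k then (1:ZMod 2) else 0) = 0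
  rw [if_neg (by omega)]
lemma w2_Ek : w2 (Ek k) = Vk k := by
  apply funext_fin; intro m hm
  show (if m + 1 = k then (1:ZMod 2) else 0) = if m = k - 1 then 1 else 0
  rcases Nat.lt_or_ge m (k-1) with h | h
  · rw [if_neg (by omega), if_neg (by omega)]
  · have : m = k - 1 := by omega
    subst this
    rw [if_pos (by omega), if_pos rfl]
lemma w1_On : w1 (On k) = Von k := rfl
lemma w2_On : w2 (On k) = Von k := rfl

lemma V0_ne_zero (hk : 1 ≤ k) : V0 k ≠ 0 := by
  intro h
  have h0 : (if (0:ℕ) = 0 then (1:ZMod 2) else 0) = 0 := congrFun h ⟨0, by omega⟩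
  rw [if_pos rfl] at h0
  exact one_ne_zero h0
lemma Vk_ne_zero (hk : 1 ≤ k) : Vk k ≠ 0 := by
  intro h
  have h0 : (if k - 1 = k - 1 then (1:ZMod 2) else 0) = 0 := congrFun h ⟨k-1, by omega⟩
  rw [if_pos rfl] at h0
  exact one_ne_zero h0
lemma Von_ne_zero (hk : 1 ≤ k) : Von k ≠ 0 := by
  intro h
  have h0 : (1:ZMod 2) = 0 := congrFun h ⟨0, by omega⟩
  exact one_ne_zero h0

lemma V0_ne_Vk (hk : 2 ≤ k) : V0 k ≠ Vk k := by
  intro h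
  have h0 : (if (0:ℕ) = 0 then (1:ZMod 2) else 0) = if (0:ℕ) = k - 1 then 1 else 0 :=
    congrFun h ⟨0, by omega⟩
  rw [if_pos rfl, if_neg (by omega)] at h0
  exact one_ne_zero h0
lemma V0_ne_Von (hk : 2 ≤ k) : V0 k ≠ Von k := by
  intro h
  have h0 : (if (1:ℕ) = 0 then (1:ZMod 2) else 0) = 1 := congrFun h ⟨1, by omega⟩
  rw [if_neg (by omega)] at h0
  exact one_ne_zero h0.symm
lemma Vk_ne_Von (hk : 2 ≤ k) : Vk k ≠ Von k := by
  intro h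
  have h0 : (if (0:ℕ) = k - 1 then (1:ZMod 2) else 0) = 1 := congrFun h ⟨0, by omega⟩
  rw [if_neg (by omega)] at h0
  exact one_ne_zero h0.symm

lemma E0_ne_Ek (hk : 1 ≤ k) : E0 k ≠ Ek k := by
  intro h
  have h0 : (if (0:ℕ) = 0 then (1:ZMod 2) else 0) = if (0:ℕ) = k then 1 else 0 :=
    congrFun h ⟨0, by omega⟩
  rw [if_pos rfl, if_neg (by omega)] at h0
  exact one_ne_zero h0
lemma E0_ne_On (hk : 1 ≤ k) : E0 k ≠ On k := by
  intro h
  have h0 : (if (1:ℕ) = 0 then (1:ZMod 2) else 0) = 1 := congrFun h ⟨1, by omega⟩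
  rw [if_neg (by omega)] at h0
  exact one_ne_zero h0.symm
lemma Ek_ne_On (hk : 1 ≤ k) : Ek k ≠ On k := by
  intro h
  have h0 : (if (0:ℕ) = k then (1:ZMod 2) else 0) = 1 := congrFun h ⟨0, by omega⟩
  rw [if_neg (by omega)] at h0
  exact one_ne_zero h0.symm

lemma E0_ne_zero : E0 k ≠ 0 := by
  intro h
  have h0 : (if (0:ℕ) = 0 then (1:ZMod 2) else 0) = 0 := congrFun h ⟨0, Nat.succ_pos k⟩
  rw [if_pos rfl] at h0
  exact one_ne_zero h0
lemma Ek_ne_zero : Ek k ≠ 0 := by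
  intro h
  have h0 : (if k = k then (1:ZMod 2) else 0) = 0 := congrFun h ⟨k, Nat.lt_succ_self k⟩
  rw [if_pos rfl] at h0
  exact one_ne_zero h0
lemma On_ne_zero : On k ≠ 0 := by
  intro h
  have h0 : (1:ZMod 2) = 0 := congrFun h ⟨0, Nat.succ_pos k⟩
  exact one_ne_zero h0

lemma set_eq (hn : 1 ≤ n) (hk : 2 ≤ k) :
    {α : Fin n → Fin (k+1) → ZMod 2 | (persMat n k α).rank = 1}
      = Sset n k (E0 k) ∪ Sset n k (Ek k) ∪ Sset n k (On k) := by
  ext α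
  simp only [Set.mem_setOf_eq, Set.mem_union, Sset]
  rw [rank_one_iff]
  constructor
  · rintro ⟨v, hv, hrows, hM⟩
    have hα : α ≠ 0 := by
      rintro rfl
      apply hM
      funext i t
      rfl
    have hblk : ∀ j : Fin n, (w1 (α j) = 0 ∨ w1 (α j) = v) ∧ (w2 (α j) = 0 ∨ w2 (α j) = v) := by
      intro j
      have hj := j.isLt
      constructor
      · have := hrows ⟨2*j.val, by omega⟩
        rwa [row_even α j] at this
      · have := hrows ⟨2*j.val+1, by omega⟩
        rwa [row_odd α j] at this
    have key : ∀ j : Fin n, α j ≠ 0 →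
        (α j = E0 k ∧ v = V0 k) ∨ (α j = Ek k ∧ v = Vk k) ∨ (α j = On k ∧ v = Von k) :=
      fun j hj => block hk hv hj (hblk j).1 (hblk j).2
    obtain ⟨j₀, hj₀⟩ := Function.ne_iff.mp hα
    rcases key j₀ hj₀ with ⟨_, rfl⟩ | ⟨_, rfl⟩ | ⟨_, rfl⟩
    · left; left
      refine ⟨fun j => ?_, hα⟩
      by_cases hz : α j = 0
      · exact Or.inl hz
      · rcases key j hz with ⟨h, _⟩ | ⟨_, hv'⟩ | ⟨_, hv'⟩
        · exact Or.inr h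
        · exact absurd hv' (V0_ne_Vk hk)
        · exact absurd hv' (V0_ne_Von hk)
    · left; right
      refine ⟨fun j => ?_, hα⟩
      by_cases hz : α j = 0
      · exact Or.inl hz
      · rcases key j hz with ⟨_, hv'⟩ | ⟨h, _⟩ | ⟨_, hv'⟩
        · exact absurd hv'.symm (V0_ne_Vk hk)
        · exact Or.inr h
        · exact absurd hv' (Vk_ne_Von hk)
    · right
      refine ⟨fun j => ?_, hα⟩
      by_cases hz : α j = 0
      · exact Or.inl hz
      · rcases key j hz with ⟨_, hv'⟩ | ⟨_, hv'⟩ | ⟨h, _⟩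
        · exact absurd hv'.symm (V0_ne_Von hk)
        · exact absurd hv'.symm (Vk_ne_Von hk)
        · exact Or.inr h
  · rintro ((⟨hmem, hne⟩ | ⟨hmem, hne⟩) | ⟨hmem, hne⟩)
    · refine ⟨V0 k, V0_ne_zero (by omega), ?_, ?_⟩
      · intro i
        obtain ⟨j, hw | hw⟩ := row_cases α i <;> rw [hw] <;>
          rcases hmem j with h | h <;> rw [h]
        · exact Or.inl w1_zero
        · exact Or.inr w1_E0
        · exact Or.inl w2_zero
        · exact Or.inl w2_E0
      · obtain ⟨j, hj⟩ := Function.ne_iff.mp hne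
        have hja : α j = E0 k := (hmem j).resolve_left hj
        intro h0
        have hj2 := j.isLt
        have := congrFun h0 ⟨2*j.val, by omega⟩
        rw [row_even α j, hja, w1_E0] at this
        exact V0_ne_zero (by omega) this
    · refine ⟨Vk k, Vk_ne_zero (by omega), ?_, ?_⟩
      · intro i
        obtain ⟨j, hw | hw⟩ := row_cases α i <;> rw [hw] <;>
          rcases hmem j with h | h <;> rw [h]
        · exact Or.inl w1_zero
        · exact Or.inl w1_Ek
        · exact Or.inl w2_zero
        · exact Or.inr w2_Ek
      · obtain ⟨j, hj⟩ := Function.ne_iff.mp hne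
        have hja : α j = Ek k := (hmem j).resolve_left hj
        intro h0
        have hj2 := j.isLt
        have := congrFun h0 ⟨2*j.val+1, by omega⟩
        rw [row_odd α j, hja, w2_Ek] at this
        exact Vk_ne_zero (by omega) this
    · refine ⟨Von k, Von_ne_zero (by omega), ?_, ?_⟩
      · intro i
        obtain ⟨j, hw | hw⟩ := row_cases α i <;> rw [hw] <;>
          rcases hmem j with h | h <;> rw [h]
        · exact Or.inl w1_zero
        · exact Or.inr w1_On
        · exact Or.inl w2_zero
        · exact Or.inr w2_On
      · obtain ⟨j, hj⟩ := Function.ne_iff.mp hne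
        have hja : α j = On k := (hmem j).resolve_left hj
        intro h0
        have hj2 := j.isLt
        have := congrFun h0 ⟨2*j.val, by omega⟩
        rw [row_even α j, hja, w1_On] at this
        exact Von_ne_zero (by omega) this

lemma card_S (a : Fin (k+1) → ZMod 2) (ha : a ≠ 0) :
    (Sset n k a).ncard = 2^n - 1 := by
  classical
  have hinj : Function.Injective (fun f : Fin n → ZMod 2 => fun j => f j • a) := by
    intro f g h
    funext j
    have hj : f j • a = g j • a := congrFun h j
    have two : ∀ d : ZMod 2, d = 0 ∨ d = 1 := by decide
    rcases two (f j) with hf | hf <;> rcases two (g j) with hg | hg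
    · rw [hf, hg]
    · exfalso; rw [hf, hg, zero_smul, one_smul] at hj; exact ha hj.symm
    · exfalso; rw [hf, hg, one_smul, zero_smul] at hj; exact ha hj
    · rw [hf, hg]
  have himg : Sset n k a
      = (fun f : Fin n → ZMod 2 => fun j => f j • a) '' {f | f ≠ 0} := by
    ext α
    constructor
    · rintro ⟨hmem, hne⟩
      refine ⟨fun j => if α j = 0 then 0 else 1, ?_, ?_⟩
      · simp only [Set.mem_setOf_eq]
        obtain ⟨j, hj⟩ := Function.ne_iff.mp hne
        have hj' : α j ≠ 0 := hj
        intro h0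
        have h1 : (if α j = 0 then (0:ZMod 2) else 1) = 0 := congrFun h0 j
        rw [if_neg hj'] at h1
        exact one_ne_zero h1
      · funext j
        show (if α j = 0 then (0:ZMod 2) else 1) • a = α j
        by_cases hz : α j = 0
        · rw [if_pos hz, zero_smul]; exact hz.symm
        · have hja : α j = a := (hmem j).resolve_left hz
          rw [if_neg hz, one_smul]; exact hja.symm
    · rintro ⟨f, hf, rfl⟩
      constructor
      · intro j
        show f j • a = 0 ∨ f j • a = a
        have two : f j = 0 ∨ f j = 1 := by
          have : ∀ d : ZMod 2, d = 0 ∨ d = 1 := by decide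
          exact this (f j)
        rcases two with h | h <;> rw [h]
        · exact Or.inl (zero_smul _ _)
        · exact Or.inr (one_smul _ _)
      · obtain ⟨j, hj⟩ := Function.ne_iff.mp hf
        have hj' : f j ≠ 0 := hj
        have hj1 : f j = 1 := ne1 _ hj'
        intro h0
        have h1 : f j • a = 0 := congrFun h0 j
        rw [hj1, one_smul] at h1
        exact ha h1
  rw [himg, Set.ncard_image_of_injective _ hinj]
  have hset : {f : Fin n → ZMod 2 | f ≠ 0} = {(0 : Fin n → ZMod 2)}ᶜ := by
    ext f; simp
  rw [hset, Set.ncard_eq_toFinset_card']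
  simp only [Set.toFinset_compl, Set.toFinset_singleton]
  rw [Finset.card_compl, Finset.card_singleton]
  congr 1
  rw [Fintype.card_fun]
  simp [ZMod.card]

lemma S_disj (a b : Fin (k+1) → ZMod 2) (hab : a ≠ b) :
    Disjoint (Sset n k a) (Sset n k b) := by
  rw [Set.disjoint_left]
  rintro α ⟨hA, hne⟩ ⟨hB, _⟩
  obtain ⟨j, hj⟩ := Function.ne_iff.mp hne
  have h1 : α j = a := (hA j).resolve_left hj
  have h2 : α j = b := (hB j).resolve_left hj
  exact hab (h1 ▸ h2)

end GammaRankOneAux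

open GammaRankOneAux in
theorem gamma_rank_one (n k : ℕ) (hn : 1 ≤ n) (hk : 2 ≤ k) :
    Gamma n k 1 = 3 * (2 ^ n - 1) := by
  classical
  have e0 : Gamma n k 1
      = ({α : Fin n → Fin (k+1) → ZMod 2 | (persMat n k α).rank = 1}).ncard :=
    Nat.card_coe_set_eq _
  rw [e0, set_eq hn hk]
  have d1 : Disjoint (Sset n k (E0 k)) (Sset n k (Ek k)) :=
    S_disj _ _ (E0_ne_Ek (by omega))
  have d2 : Disjoint (Sset n k (E0 k) ∪ Sset n k (Ek k)) (Sset n k (On k)) := by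
    rw [Set.disjoint_union_left]
    exact ⟨S_disj _ _ (E0_ne_On (by omega)), S_disj _ _ (Ek_ne_On (by omega))⟩
  rw [Set.ncard_union_eq d2 (Set.toFinite _) (Set.toFinite _),
      Set.ncard_union_eq d1 (Set.toFinite _) (Set.toFinite _),
      card_S _ E0_ne_zero, card_S _ Ek_ne_zero, card_S _ On_ne_zero]
  omega
end

section
/- For n ≥ 1, k ≥ 1, and q ≥ 1, the number of solutions (Y₁,U₁^{(1)},…,U_n^{(1)},…,Y_q,U₁^{(q)},…,U_n^{(q)}) ∈ (F₂[T])^{(n+1)q}, with deg Y_i ≤ k−1 and deg U_j^{(i)} ≤ 1, of the system ∑_{i=1}^q Y_i U_j^{(i)} = 0 for j = 1,…,n, equals 2^{q(2n+k) − (k+1)n} · ∑_{i=0}^{min(2n,k)} Γ_i · 2^{−iq}, where Γ_i is the number of n-times persymmetric 2n×k matrices over F₂ of rank i. -/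
set_option maxHeartbeats 1000000

noncomputable section
open Finset Matrix

abbrev F2 := ZMod 2

def chi (x : F2) : ℚ := if x = 0 then 1 else -1

lemma chi_zero : chi 0 = 1 := rfl

lemma F2_eq (x : F2) : x = 0 ∨ x = 1 := by revert x; decide

lemma chi_add (a b : F2) : chi (a + b) = chi a * chi b := by
  rcases F2_eq a with rfl | rfl <;> rcases F2_eq b with rfl | rfl <;>
    simp [chi, show ((1:F2) + 1 = 0) from by decide, show ((1:F2) ≠ 0) from by decide]

lemma chi_sum {ι : Type*} (s : Finset ι) (f : ι → F2) :
    chi (∑ i ∈ s, f i) = ∏ i ∈ s, chi (f i) := by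
  induction s using Finset.cons_induction with
  | empty => simp [chi_zero]
  | cons a s ha ih => rw [Finset.sum_cons, Finset.prod_cons, chi_add, ih]

/-- Character sum over a vector space detects zero. -/
lemma sum_chi_dot {m : ℕ} (v : Fin m → F2) :
    ∑ β : Fin m → F2, chi (∑ a, β a * v a) = if v = 0 then (2:ℚ)^m else 0 := by
  by_cases hv : v = 0
  · simp [hv, chi_zero, Finset.card_univ]
  · simp only [hv, if_false]
    obtain ⟨a, ha⟩ : ∃ a, v a ≠ 0 := by
      by_contra h; push_neg at h; exact hv (funext h)
    have hva : v a = 1 := (F2_eq (v a)).resolve_left ha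
    set s : Fin m → F2 := fun x => if x = a then 1 else 0 with hs
    set g : (Fin m → F2) → ℚ := fun β => chi (∑ x, β x * v x) with hg
    have key : ∀ β, g (β + s) = - g β := by
      intro β
      have h1 : ∑ x, (β + s) x * v x = (∑ x, β x * v x) + 1 := by
        simp only [Pi.add_apply, add_mul, Finset.sum_add_distrib]
        congr 1
        rw [← hva, hs]
        simp
      simp only [hg, h1, chi_add]
      have h4 : chi 1 = -1 := rfl
      rw [h4]; ring
    have h3 : ∑ β, g β = - ∑ β, g β := by
      conv_lhs => rw [← Equiv.sum_comp (Equiv.addRight s) g]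
      have : ∀ β : Fin m → F2, g (Equiv.addRight s β) = - g β := key
      rw [Finset.sum_congr rfl (fun β _ => this β), Finset.sum_neg_distrib]
    linarith

lemma card_ker {N M : ℕ} (A : Matrix (Fin N) (Fin M) F2) :
    Nat.card {u : Fin M → F2 // A.mulVec u = 0} = 2 ^ (M - A.rank) := by
  have e : {u : Fin M → F2 // A.mulVec u = 0} ≃ LinearMap.ker A.mulVecLin :=
    Equiv.subtypeEquivRight (fun u => by simp [LinearMap.mem_ker])
  letI : Fintype ↥(LinearMap.ker A.mulVecLin) := Fintype.ofFinite _
  rw [Nat.card_congr e, Nat.card_eq_fintype_card,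
    Module.card_eq_pow_finrank (K := F2) (V := ↥(LinearMap.ker A.mulVecLin))]
  have h1 := LinearMap.finrank_range_add_finrank_ker A.mulVecLin
  have h2 : Module.finrank F2 (Fin M → F2) = M := by simp
  have h3 : A.rank = Module.finrank F2 (LinearMap.range A.mulVecLin) := rfl
  have h4 : Fintype.card F2 = 2 := by simp
  rw [h4]
  congr 1
  omega

lemma gauss {N M : ℕ} (A : Matrix (Fin N) (Fin M) F2) :
    ∑ p : (Fin M → F2) × (Fin N → F2), chi (∑ a, p.1 a * Aᵀ.mulVec p.2 a)
      = (2:ℚ) ^ (M + N - A.rank) := by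
  have hr : A.rank ≤ N := by
    have := A.rank_le_card_height; simpa using this
  rw [Fintype.sum_prod_type_right]
  calc ∑ u : Fin N → F2, ∑ y : Fin M → F2, chi (∑ a, y a * Aᵀ.mulVec u a)
      = ∑ u : Fin N → F2, if Aᵀ.mulVec u = 0 then (2:ℚ)^M else 0 := by
        refine Finset.sum_congr rfl fun u _ => sum_chi_dot _
    _ = ∑ u ∈ Finset.univ.filter (fun (u : Fin N → F2) => Aᵀ.mulVec u = 0), (2:ℚ)^M := by
        rw [Finset.sum_filter]
    _ = (Nat.card {u : Fin N → F2 // Aᵀ.mulVec u = 0} : ℚ) * 2^M := by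
        rw [Finset.sum_const, Nat.card_eq_fintype_card, Fintype.card_subtype]
        simp [mul_comm]
    _ = (2:ℚ) ^ (M + N - A.rank) := by
        rw [card_ker, Matrix.rank_transpose]
        push_cast
        rw [← pow_add]
        congr 1
        omega

def ofc {m : ℕ} (c : Fin m → F2) : Polynomial F2 :=
  ∑ a : Fin m, Polynomial.C (c a) * Polynomial.X ^ (a : ℕ)

lemma coeff_ofc {m : ℕ} (c : Fin m → F2) (t : ℕ) :
    (ofc c).coeff t = if h : t < m then c ⟨t, h⟩ else 0 := by
  rw [ofc, Polynomial.finset_sum_coeff]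
  simp only [Polynomial.coeff_C_mul, Polynomial.coeff_X_pow, mul_ite, mul_one, mul_zero]
  by_cases h : t < m
  · rw [dif_pos h, Finset.sum_eq_single ⟨t, h⟩]
    · simp
    · intro b _ hb
      rw [if_neg]
      intro hc
      exact hb (Fin.ext hc.symm)
    · simp
  · rw [dif_neg h, Finset.sum_eq_zero]
    intro b _
    rw [if_neg]
    intro hc
    exact h (hc ▸ b.isLt)

lemma degree_ofc_lt {m : ℕ} (c : Fin m → F2) : (ofc c).degree < (m : ℕ) := by
  rw [Polynomial.degree_lt_iff_coeff_zero]
  intro t ht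
  rw [coeff_ofc, dif_neg]
  exact fun h => absurd (Nat.cast_le.mp ht) (by omega)

lemma ofc_coeff {m : ℕ} (p : Polynomial F2) (h : p.degree < (m : ℕ)) :
    ofc (fun a : Fin m => p.coeff a) = p := by
  ext t
  rw [coeff_ofc]
  by_cases ht : t < m
  · rw [dif_pos ht]
  · rw [dif_neg ht]
    exact (Polynomial.coeff_eq_zero_of_degree_lt (lt_of_lt_of_le h (Nat.cast_le.mpr (by omega)))).symm

lemma degree_le_sub_one_iff {k : ℕ} (hk : 1 ≤ k) (p : Polynomial F2) :
    p.degree ≤ ((k - 1 : ℕ) : WithBot ℕ) ↔ p.degree < (k : ℕ) := by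
  rw [Polynomial.degree_le_iff_coeff_zero, Polynomial.degree_lt_iff_coeff_zero]
  constructor <;> intro h m hm <;> apply h
  · have : k ≤ m := by exact_mod_cast hm
    exact_mod_cast (by omega : k - 1 < m)
  · have : k - 1 < m := by exact_mod_cast hm
    exact_mod_cast (by omega : k ≤ m)

def Bcoef {k : ℕ} (y : Fin k → F2) (u : Fin 2 → F2) (t : ℕ) : F2 :=
  ∑ a : Fin k, ∑ b : Fin 2, if (a : ℕ) + (b : ℕ) = t then y a * u b else 0

lemma coeff_mul_ofc {k : ℕ} (y : Fin k → F2) (u : Fin 2 → F2) (t : ℕ) :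
    (ofc y * ofc u).coeff t = Bcoef y u t := by
  rw [ofc, ofc, Finset.sum_mul_sum]
  rw [Polynomial.finset_sum_coeff, Bcoef]
  refine Finset.sum_congr rfl fun a _ => ?_
  rw [Polynomial.finset_sum_coeff]
  refine Finset.sum_congr rfl fun b _ => ?_
  rw [mul_mul_mul_comm, ← Polynomial.C_mul, ← pow_add, Polynomial.coeff_C_mul,
    Polynomial.coeff_X_pow]
  simp [eq_comm]

lemma Bcoef_zero {k : ℕ} (y : Fin k → F2) (u : Fin 2 → F2) {t : ℕ} (ht : k < t) :
    Bcoef y u t = 0 := by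
  rw [Bcoef]
  refine Finset.sum_eq_zero fun a _ => Finset.sum_eq_zero fun b _ => ?_
  rw [if_neg]
  have := a.isLt; have := b.isLt
  omega

def e2 (n : ℕ) : Fin n × Fin 2 ≃ Fin (2 * n) where
  toFun p := ⟨2 * p.1.1 + p.2.1, by have := p.1.isLt; have := p.2.isLt; omega⟩
  invFun r := (⟨r.1 / 2, by have := r.isLt; omega⟩, ⟨r.1 % 2, by omega⟩)
  left_inv := by rintro ⟨⟨a, ha⟩, ⟨b, hb⟩⟩; simp only [Prod.mk.injEq]; constructor <;> ext <;> simp <;> omega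
  right_inv := by rintro ⟨r, hr⟩; ext; simp; omega

def eU (n : ℕ) : (Fin n → Fin 2 → F2) ≃ (Fin (2*n) → F2) where
  toFun u := fun r => u ((e2 n).symm r).1 ((e2 n).symm r).2
  invFun u' := fun j b => u' (e2 n (j, b))
  left_inv u := by funext j b; simp
  right_inv u' := by funext r; simp

lemma persMat_e2 {n k : ℕ} (α : Fin n → Fin (k+1) → F2) (j : Fin n) (b : Fin 2) (a : Fin k) :
    persMat n k α (e2 n (j, b)) a
      = α j ⟨(a:ℕ) + (b:ℕ), by have := a.isLt; have := b.isLt; omega⟩ := by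
  have hb := b.isLt
  simp only [persMat, e2, Equiv.coe_fn_mk]
  congr 1
  · ext; simp only; omega
  · ext; simp only; omega

lemma exp_eq {n k : ℕ} (α : Fin n → Fin (k+1) → F2) (y : Fin k → F2) (u : Fin n → Fin 2 → F2) :
    ∑ j, ∑ m : Fin (k+1), α j m * Bcoef y (u j) (m:ℕ)
      = ∑ a, y a * (persMat n k α)ᵀ.mulVec (eU n u) a := by
  have lhs : ∀ j : Fin n, ∑ m : Fin (k+1), α j m * Bcoef y (u j) (m:ℕ)
      = ∑ a : Fin k, ∑ b : Fin 2,
          α j ⟨(a:ℕ) + (b:ℕ), by have := a.isLt; have := b.isLt; omega⟩ * (y a * u j b) := by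
    intro j
    calc ∑ m : Fin (k+1), α j m * Bcoef y (u j) (m:ℕ)
        = ∑ m : Fin (k+1), ∑ a : Fin k, ∑ b : Fin 2,
            (if (a:ℕ) + (b:ℕ) = (m:ℕ) then α j m * (y a * u j b) else 0) := by
          simp only [Bcoef, Finset.mul_sum, mul_ite, mul_zero]
      _ = ∑ a : Fin k, ∑ m : Fin (k+1), ∑ b : Fin 2,
            (if (a:ℕ) + (b:ℕ) = (m:ℕ) then α j m * (y a * u j b) else 0) := Finset.sum_comm
      _ = ∑ a : Fin k, ∑ b : Fin 2, ∑ m : Fin (k+1),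
            (if (a:ℕ) + (b:ℕ) = (m:ℕ) then α j m * (y a * u j b) else 0) :=
          Finset.sum_congr rfl fun a _ => Finset.sum_comm
      _ = _ := by
          refine Finset.sum_congr rfl fun a _ => Finset.sum_congr rfl fun b _ => ?_
          rw [Finset.sum_eq_single (⟨(a:ℕ) + (b:ℕ), by have := a.isLt; have := b.isLt; omega⟩
            : Fin (k+1))]
          · rw [if_pos rfl]
          · intro m _ hm
            exact if_neg (fun hc => hm (Fin.ext hc.symm))
          · simp
  rw [Finset.sum_congr rfl (fun j _ => lhs j)]
  have rhs : ∀ a : Fin k, (persMat n k α)ᵀ.mulVec (eU n u) a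
      = ∑ j : Fin n, ∑ b : Fin 2,
          α j ⟨(a:ℕ) + (b:ℕ), by have := a.isLt; have := b.isLt; omega⟩ * u j b := by
    intro a
    rw [Matrix.mulVec]
    show ∑ r : Fin (2*n), persMat n k α r a * eU n u r = _
    rw [← Equiv.sum_comp (e2 n) (fun r => persMat n k α r a * eU n u r), Fintype.sum_prod_type]
    refine Finset.sum_congr rfl fun j _ => Finset.sum_congr rfl fun b _ => ?_
    rw [persMat_e2]
    congr 1
    show u _ _ = u j b
    rw [Equiv.symm_apply_apply]
  rw [Finset.sum_comm]
  refine Finset.sum_congr rfl fun a _ => ?_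
  rw [rhs a, Finset.mul_sum]
  refine Finset.sum_congr rfl fun j _ => ?_
  rw [Finset.mul_sum]
  refine Finset.sum_congr rfl fun b _ => ?_
  ring

lemma S_eq {n k : ℕ} (α : Fin n → Fin (k+1) → F2) :
    ∑ c : (Fin k → F2) × (Fin n → Fin 2 → F2),
        chi (∑ j, ∑ m : Fin (k+1), α j m * Bcoef c.1 (c.2 j) (m:ℕ))
      = (2:ℚ) ^ (k + 2*n - (persMat n k α).rank) := by
  rw [← gauss (persMat n k α)]
  exact Fintype.sum_equiv (Equiv.prodCongr (Equiv.refl _) (eU n)) _ _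
    (fun c => congrArg chi (exp_eq α c.1 c.2))

lemma sum_zero_iff {q k : ℕ} (y : Fin q → Fin k → F2) (u : Fin q → Fin 2 → F2) :
    (∑ i, ofc (y i) * ofc (u i) = 0) ↔
      ∀ m : Fin (k+1), ∑ i, Bcoef (y i) (u i) (m:ℕ) = 0 := by
  have hc : ∀ t : ℕ, (∑ i, ofc (y i) * ofc (u i)).coeff t = ∑ i, Bcoef (y i) (u i) t := by
    intro t
    rw [Polynomial.finset_sum_coeff]
    exact Finset.sum_congr rfl fun i _ => coeff_mul_ofc _ _ t
  constructor
  · intro h m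
    rw [← hc, h, Polynomial.coeff_zero]
  · intro h
    ext t
    rw [hc, Polynomial.coeff_zero]
    by_cases ht : t < k + 1
    · exact h ⟨t, ht⟩
    · exact Finset.sum_eq_zero fun i _ => Bcoef_zero _ _ (by omega)

lemma deg_le_one_iff (p : Polynomial F2) : p.degree ≤ 1 ↔ p.degree < (2 : ℕ) := by
  have := degree_le_sub_one_iff (k := 2) (by norm_num) p
  rw [show ((2 - 1 : ℕ) : WithBot ℕ) = (1 : WithBot ℕ) by norm_num] at this
  exact_mod_cast this

lemma card_eq (n k q : ℕ) (hk : 1 ≤ k) :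
    Nat.card {p : (Fin q → Polynomial F2) × (Fin q → Fin n → Polynomial F2) //
        (∀ i, (p.1 i).degree ≤ (k - 1 : ℕ)) ∧ (∀ i j, (p.2 i j).degree ≤ 1) ∧
          (∀ j, ∑ i, p.1 i * p.2 i j = 0)}
      = Nat.card {c : (Fin q → Fin k → F2) × (Fin q → Fin n → Fin 2 → F2) //
          ∀ (j : Fin n) (m : Fin (k+1)), ∑ i, Bcoef (c.1 i) (c.2 i j) (m:ℕ) = 0} := by
  apply Nat.card_congr
  refine ⟨fun p => ⟨(fun i a => (p.1.1 i).coeff a, fun i j b => (p.1.2 i j).coeff b), ?_⟩,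
    fun c => ⟨(fun i => ofc (c.1.1 i), fun i j => ofc (c.1.2 i j)), ?_, ?_, ?_⟩, ?_, ?_⟩
  · obtain ⟨⟨Y, U⟩, h1, h2, h3⟩ := p
    intro j m
    have hy : ∀ i, ofc (fun a : Fin k => (Y i).coeff a) = Y i :=
      fun i => ofc_coeff _ ((degree_le_sub_one_iff hk _).mp (h1 i))
    have hu : ∀ i, ofc (fun b : Fin 2 => (U i j).coeff b) = U i j :=
      fun i => ofc_coeff _ ((deg_le_one_iff _).mp (h2 i j))
    refine (sum_zero_iff _ _).mp ?_ m
    simp only [hy, hu]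
    exact h3 j
  · exact fun i => (degree_le_sub_one_iff hk _).mpr (degree_ofc_lt _)
  · exact fun i j => (deg_le_one_iff _).mpr (degree_ofc_lt _)
  · exact fun j => (sum_zero_iff _ _).mpr (c.2 j)
  · rintro ⟨⟨Y, U⟩, h1, h2, h3⟩
    apply Subtype.ext
    refine Prod.ext ?_ ?_
    · funext i
      exact ofc_coeff _ ((degree_le_sub_one_iff hk _).mp (h1 i))
    · funext i j
      exact ofc_coeff _ ((deg_le_one_iff _).mp (h2 i j))
  · rintro ⟨⟨y, u⟩, h⟩
    apply Subtype.ext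
    refine Prod.ext ?_ ?_
    · funext i a
      simp [coeff_ofc, a.isLt]
    · funext i j b
      simp [coeff_ofc, b.isLt]

lemma ind_forall_prod {n' : ℕ} (Q : Fin n' → Prop) [DecidablePred Q] :
    (if ∀ j, Q j then (1:ℚ) else 0) = ∏ j, if Q j then (1:ℚ) else 0 := by
  by_cases h : ∀ j, Q j
  · rw [if_pos h, Finset.prod_eq_one fun j _ => if_pos (h j)]
  · push_neg at h
    obtain ⟨j, hj⟩ := h
    rw [if_neg (fun hh => hj (hh j)), eq_comm]
    exact Finset.prod_eq_zero (Finset.mem_univ j) (if_neg hj)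

lemma ind2 {k : ℕ} (W : Fin (k+1) → F2) :
    (if ∀ m, W m = 0 then (1:ℚ) else 0)
      = ((2:ℚ)^(k+1))⁻¹ * ∑ β : Fin (k+1) → F2, chi (∑ m, β m * W m) := by
  rw [sum_chi_dot W]
  by_cases h : W = 0
  · have h' : ∀ m, W m = (0 : F2) := fun m => by rw [h]; rfl
    rw [if_pos h, if_pos h', inv_mul_cancel₀ (by positivity)]
  · have h' : ¬ ∀ m, W m = (0 : F2) := fun hh => h (funext hh)
    rw [if_neg h', if_neg h, mul_zero]

lemma sum_prod_chi {n k q : ℕ} (α : Fin n → Fin (k+1) → F2) :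
    ∑ c : (Fin q → Fin k → F2) × (Fin q → Fin n → Fin 2 → F2),
        ∏ j, chi (∑ m : Fin (k+1), α j m * ∑ i, Bcoef (c.1 i) (c.2 i j) (m:ℕ))
      = ((2:ℚ) ^ (k + 2*n - (persMat n k α).rank))^q := by
  have hswap : ∀ c : (Fin q → Fin k → F2) × (Fin q → Fin n → Fin 2 → F2),
      ∏ j, chi (∑ m : Fin (k+1), α j m * ∑ i, Bcoef (c.1 i) (c.2 i j) (m:ℕ))
        = ∏ i, chi (∑ j, ∑ m : Fin (k+1), α j m * Bcoef (c.1 i) (c.2 i j) (m:ℕ)) := by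
    intro c
    rw [← chi_sum, ← chi_sum]
    congr 1
    calc ∑ j, ∑ m : Fin (k+1), α j m * ∑ i, Bcoef (c.1 i) (c.2 i j) (m:ℕ)
        = ∑ j, ∑ m : Fin (k+1), ∑ i, α j m * Bcoef (c.1 i) (c.2 i j) (m:ℕ) := by
          simp [Finset.mul_sum]
      _ = ∑ j, ∑ i, ∑ m : Fin (k+1), α j m * Bcoef (c.1 i) (c.2 i j) (m:ℕ) :=
          Finset.sum_congr rfl fun j _ => Finset.sum_comm
      _ = ∑ i, ∑ j, ∑ m : Fin (k+1), α j m * Bcoef (c.1 i) (c.2 i j) (m:ℕ) := Finset.sum_comm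
  rw [Finset.sum_congr rfl (fun c _ => hswap c)]
  set g : (Fin k → F2) × (Fin n → Fin 2 → F2) → ℚ :=
    fun d => chi (∑ j, ∑ m : Fin (k+1), α j m * Bcoef d.1 (d.2 j) (m:ℕ)) with hg
  calc ∑ c : (Fin q → Fin k → F2) × (Fin q → Fin n → Fin 2 → F2),
        ∏ i, chi (∑ j, ∑ m : Fin (k+1), α j m * Bcoef (c.1 i) (c.2 i j) (m:ℕ))
      = ∑ p : Fin q → (Fin k → F2) × (Fin n → Fin 2 → F2), ∏ i, g (p i) :=
        (Fintype.sum_equiv (Equiv.arrowProdEquivProdArrow (Fin q) (fun _ => Fin k → F2)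
          (fun _ => Fin n → Fin 2 → F2)) _ _ (fun p => rfl)).symm
    _ = (∑ d, g d)^q := (Fintype.sum_pow g q).symm
    _ = ((2:ℚ) ^ (k + 2*n - (persMat n k α).rank))^q := by rw [hg, S_eq]

theorem count_system_solutions (n k q : ℕ) (hn : 1 ≤ n) (hk : 1 ≤ k) (hq : 1 ≤ q) :
    (Nat.card {p : (Fin q → Polynomial (ZMod 2)) × (Fin q → Fin n → Polynomial (ZMod 2)) //
        (∀ i, (p.1 i).degree ≤ (k - 1 : ℕ)) ∧ (∀ i j, (p.2 i j).degree ≤ 1) ∧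
          (∀ j, ∑ i, p.1 i * p.2 i j = 0)} : ℚ) =
      (2 : ℚ) ^ ((q * (2 * n + k) : ℤ) - (k + 1) * n) *
        ∑ i ∈ Finset.range (min (2 * n) k + 1), (Gamma n k i : ℚ) * (2 : ℚ) ^ (-(i * q : ℤ)) := by
  classical
  rw [card_eq n k q hk]
  have h0 : (Nat.card {c : (Fin q → Fin k → F2) × (Fin q → Fin n → Fin 2 → F2) //
      ∀ (j : Fin n) (m : Fin (k+1)), ∑ i, Bcoef (c.1 i) (c.2 i j) (m:ℕ) = 0} : ℚ)
      = ∑ c : (Fin q → Fin k → F2) × (Fin q → Fin n → Fin 2 → F2),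
          if (∀ (j : Fin n) (m : Fin (k+1)), ∑ i, Bcoef (c.1 i) (c.2 i j) (m:ℕ) = 0)
          then (1:ℚ) else 0 := by
    rw [Nat.card_eq_fintype_card, Fintype.card_subtype, Finset.card_filter]
    push_cast
    exact Finset.sum_congr rfl fun c _ => by split_ifs <;> simp
  rw [h0]
  have h1 : ∀ c : (Fin q → Fin k → F2) × (Fin q → Fin n → Fin 2 → F2),
      (if (∀ (j : Fin n) (m : Fin (k+1)), ∑ i, Bcoef (c.1 i) (c.2 i j) (m:ℕ) = 0)
        then (1:ℚ) else 0)
      = ((2:ℚ)^(k+1))⁻¹^n * ∏ j : Fin n, ∑ β : Fin (k+1) → F2,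
          chi (∑ m : Fin (k+1), β m * ∑ i, Bcoef (c.1 i) (c.2 i j) (m:ℕ)) := by
    intro c
    calc (if (∀ (j : Fin n) (m : Fin (k+1)), ∑ i, Bcoef (c.1 i) (c.2 i j) (m:ℕ) = 0)
          then (1:ℚ) else 0)
        = ∏ j : Fin n, if (∀ m : Fin (k+1), ∑ i, Bcoef (c.1 i) (c.2 i j) (m:ℕ) = 0)
            then (1:ℚ) else 0 :=
          ind_forall_prod (fun j => ∀ m : Fin (k+1), ∑ i, Bcoef (c.1 i) (c.2 i j) (m:ℕ) = 0)
      _ = ∏ j : Fin n, (((2:ℚ)^(k+1))⁻¹ * ∑ β : Fin (k+1) → F2,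
            chi (∑ m : Fin (k+1), β m * ∑ i, Bcoef (c.1 i) (c.2 i j) (m:ℕ))) :=
          Finset.prod_congr rfl fun j _ =>
            ind2 (fun m => ∑ i, Bcoef (c.1 i) (c.2 i j) (m:ℕ))
      _ = _ := by
          rw [Finset.prod_mul_distrib, Finset.prod_const, Finset.card_univ, Fintype.card_fin]
  rw [Finset.sum_congr rfl fun c _ => h1 c, ← Finset.mul_sum]
  have h2 : ∀ c : (Fin q → Fin k → F2) × (Fin q → Fin n → Fin 2 → F2),
      ∏ j : Fin n, ∑ β : Fin (k+1) → F2,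
          chi (∑ m : Fin (k+1), β m * ∑ i, Bcoef (c.1 i) (c.2 i j) (m:ℕ))
        = ∑ α : Fin n → Fin (k+1) → F2, ∏ j : Fin n,
            chi (∑ m : Fin (k+1), α j m * ∑ i, Bcoef (c.1 i) (c.2 i j) (m:ℕ)) :=
    by intro c; exact Fintype.prod_sum _
  rw [Finset.sum_congr rfl fun c _ => h2 c, Finset.sum_comm]
  rw [Finset.sum_congr rfl fun α _ => sum_prod_chi α]
  have hfib : ∑ α : Fin n → Fin (k+1) → F2, ((2:ℚ)^(k + 2*n - (persMat n k α).rank))^q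
      = ∑ i ∈ Finset.range (min (2*n) k + 1),
          (Gamma n k i : ℚ) * ((2:ℚ)^(k + 2*n - i))^q := by
    have hmaps : ∀ α ∈ (Finset.univ : Finset (Fin n → Fin (k+1) → F2)),
        (persMat n k α).rank ∈ Finset.range (min (2*n) k + 1) := by
      intro α _
      rw [Finset.mem_range]
      have hw := (persMat n k α).rank_le_width
      have hh := (persMat n k α).rank_le_height
      omega
    rw [← Finset.sum_fiberwise_of_maps_to' hmaps (fun i => ((2:ℚ)^(k + 2*n - i))^q)]
    refine Finset.sum_congr rfl fun i _ => ?_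
    rw [Finset.sum_const, nsmul_eq_mul]
    congr 1
    rw [Gamma, Nat.card_eq_fintype_card, Fintype.card_subtype]
  rw [hfib, Finset.mul_sum, Finset.mul_sum]
  refine Finset.sum_congr rfl fun i hi => ?_
  have hik : i ≤ min (2*n) k := by have := Finset.mem_range.mp hi; omega
  have hexp : (-(((k+1)*n : ℕ) : ℤ)) + (((k + 2*n - i) * q : ℕ) : ℤ)
      = ((q * (2 * n + k) : ℤ) - (k + 1) * n) + (-(i * q : ℤ)) := by
    push_cast [Nat.cast_sub (show i ≤ k + 2*n by omega)]
    ring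
  calc ((2:ℚ)^(k+1))⁻¹^n * ((Gamma n k i : ℚ) * ((2:ℚ)^(k + 2*n - i))^q)
      = (Gamma n k i : ℚ) * ((2:ℚ)^(-(((k+1)*n : ℕ) : ℤ))
          * (2:ℚ)^((((k + 2*n - i) * q : ℕ)) : ℤ)) := by
        rw [inv_pow, ← pow_mul, ← pow_mul, ← zpow_natCast (2:ℚ) ((k+1)*n),
          ← zpow_natCast (2:ℚ) ((k + 2*n - i)*q), ← _root_.zpow_neg]
        ring
    _ = (Gamma n k i : ℚ) * ((2:ℚ)^((q * (2 * n + k) : ℤ) - (k + 1) * n)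
          * (2:ℚ)^(-(i * q : ℤ))) := by
        rw [← zpow_add₀ (by norm_num : (2:ℚ) ≠ 0), ← zpow_add₀ (by norm_num : (2:ℚ) ≠ 0), hexp]
    _ = _ := by ring
end
end

section
/- For k ≥ 2, the number of quintuple persymmetric 10×k matrices over F₂ of rank 1 equals 93. -/
namespace G5Aux

open Submodule Module

/-- first window -/
def w0 (k : ℕ) (a : Fin (k+1) → ZMod 2) : Fin k → ZMod 2 := fun c => a c.castSucc
/-- second window -/
def w1 (k : ℕ) (a : Fin (k+1) → ZMod 2) : Fin k → ZMod 2 := fun c => a c.succ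

/-- the three possible α-vectors -/
def aW (k : ℕ) (t : Fin 3) : Fin (k+1) → ZMod 2 := fun c =>
  if t.val = 0 then 1
  else if t.val = 1 then (if c.val = 0 then 1 else 0)
  else (if c.val = k then 1 else 0)

/-- the three possible rank-one row vectors -/
def vW (k : ℕ) (t : Fin 3) : Fin k → ZMod 2 := fun c =>
  if t.val = 0 then 1
  else if t.val = 1 then (if c.val = 0 then 1 else 0)
  else (if c.val = k - 1 then 1 else 0)

lemma zmod2_cases (x : ZMod 2) : x = 0 ∨ x = 1 := by revert x; decide

lemma window_zero {k : ℕ} (hk : 0 < k) {a : Fin (k+1) → ZMod 2}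
    (h0 : w0 k a = 0) (h1 : w1 k a = 0) : a = 0 := by
  funext i
  by_cases hi : i.val < k
  · have := congrFun h0 ⟨i.val, hi⟩
    simpa [w0, show (⟨i.val, hi⟩ : Fin k).castSucc = i from Fin.ext rfl] using this
  · have := congrFun h1 ⟨k-1, by omega⟩
    have he : (⟨k-1, by omega⟩ : Fin k).succ = i :=
      Fin.ext (by have := i.isLt; simp [Fin.val_succ]; omega)
    simpa [w1, he] using this

lemma aW_zero_apply {k : ℕ} (c : Fin (k+1)) : aW k 0 c = 1 := rfl
lemma aW_one_apply {k : ℕ} (c : Fin (k+1)) : aW k 1 c = if c.val = 0 then 1 else 0 := rfl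
lemma aW_two_apply {k : ℕ} (c : Fin (k+1)) : aW k 2 c = if c.val = k then 1 else 0 := rfl
lemma vW_zero_apply {k : ℕ} (c : Fin k) : vW k 0 c = 1 := rfl
lemma vW_one_apply {k : ℕ} (c : Fin k) : vW k 1 c = if c.val = 0 then 1 else 0 := rfl
lemma vW_two_apply {k : ℕ} (c : Fin k) : vW k 2 c = if c.val = k - 1 then 1 else 0 := rfl

lemma aW_ne_zero {k : ℕ} (t : Fin 3) : aW k t ≠ 0 := by
  have ht := t.isLt
  intro h
  have h0 := congrFun h ⟨0, by omega⟩
  have h2 := congrFun h ⟨k, by omega⟩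
  simp only [aW, Pi.zero_apply] at h0 h2
  split_ifs at h0 h2 <;>
    first
      | omega
      | exact one_ne_zero h0
      | exact one_ne_zero h2
      | simp_all

lemma vW_ne_zero {k : ℕ} (hk : 0 < k) (t : Fin 3) : vW k t ≠ 0 := by
  have ht := t.isLt
  intro h
  have h0 := congrFun h ⟨0, hk⟩
  have h2 := congrFun h ⟨k - 1, by omega⟩
  simp only [vW, Pi.zero_apply] at h0 h2
  split_ifs at h0 h2 <;>
    first
      | omega
      | exact one_ne_zero h0
      | exact one_ne_zero h2
      | simp_all

lemma aW_inj {k : ℕ} (hk : 2 ≤ k) {t t' : Fin 3} (h : aW k t = aW k t') : t = t' := by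
  by_contra hne
  have key : ∀ u u' : Fin 3, aW k u = aW k u' → u.val < u'.val → False := by
    intro u u' hu hlt
    have hu' := u'.isLt
    have h0 := congrFun hu ⟨0, by omega⟩
    have h1 := congrFun hu ⟨1, by omega⟩
    simp only [aW] at h0 h1
    split_ifs at h0 h1 <;>
      first
        | omega
        | exact one_ne_zero h0
        | exact one_ne_zero h1
        | exact one_ne_zero h0.symm
        | exact one_ne_zero h1.symm
        | simp_all
  rcases Nat.lt_or_ge t.val t'.val with hlt | hge
  · exact key t t' h hlt
  · have hlt : t'.val < t.val := by
      rcases Nat.lt_or_ge t'.val t.val with h' | h'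
      · exact h'
      · exact absurd (Fin.ext (le_antisymm h' hge)) (fun hx => hne hx)
    exact key t' t h.symm hlt
lemma vW_inj {k : ℕ} (hk : 2 ≤ k) {t t' : Fin 3} (h : vW k t = vW k t') : t = t' := by
  by_contra hne
  have key : ∀ u u' : Fin 3, vW k u = vW k u' → u.val < u'.val → False := by
    intro u u' hu hlt
    have hu' := u'.isLt
    have h0 := congrFun hu ⟨0, by omega⟩
    have h1 := congrFun hu ⟨1, by omega⟩
    simp only [vW] at h0 h1
    split_ifs at h0 h1 <;>
      first
        | omega
        | exact one_ne_zero h0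
        | exact one_ne_zero h1
        | exact one_ne_zero h0.symm
        | exact one_ne_zero h1.symm
        | simp_all
  rcases Nat.lt_or_ge t.val t'.val with hlt | hge
  · exact key t t' h hlt
  · have hlt : t'.val < t.val := by
      rcases Nat.lt_or_ge t'.val t.val with h' | h'
      · exact h'
      · exact absurd (Fin.ext (le_antisymm h' hge)) (fun hx => hne hx)
    exact key t' t h.symm hlt

/-- window values on the special vectors -/
lemma w0_aW0 {k : ℕ} : w0 k (aW k 0) = vW k 0 := by funext c; rfl
lemma w1_aW0 {k : ℕ} : w1 k (aW k 0) = vW k 0 := by funext c; rfl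
lemma w0_aW1 {k : ℕ} : w0 k (aW k 1) = vW k 1 := by funext c; rfl
lemma w1_aW1 {k : ℕ} : w1 k (aW k 1) = 0 := by
  funext c
  simp only [w1, aW_one_apply, Pi.zero_apply, Fin.val_succ]
  rw [if_neg (by omega)]
lemma w0_aW2 {k : ℕ} : w0 k (aW k 2) = 0 := by
  funext c
  have hc := c.isLt
  simp only [w0, aW_two_apply, Pi.zero_apply, Fin.coe_castSucc]
  rw [if_neg (by omega)]
lemma w1_aW2 {k : ℕ} (hk : 0 < k) : w1 k (aW k 2) = vW k 2 := by
  funext c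
  have hc := c.isLt
  simp only [w1, aW_two_apply, vW_two_apply, Fin.val_succ]
  by_cases h : c.val + 1 = k
  · rw [if_pos h, if_pos (by omega)]
  · rw [if_neg h, if_neg (by omega)]

/-- The key classification of a window pair contained in `{0, v}` with `v ≠ 0`. -/
lemma classify {k : ℕ} (hk : 2 ≤ k) {v : Fin k → ZMod 2} {a : Fin (k+1) → ZMod 2}
    (hv : v ≠ 0)
    (h0 : w0 k a = 0 ∨ w0 k a = v) (h1 : w1 k a = 0 ∨ w1 k a = v) :
    a = 0 ∨ ∃ t : Fin 3, v = vW k t ∧ a = aW k t := by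
  rcases h0 with h0 | h0 <;> rcases h1 with h1 | h1
  · exact Or.inl (window_zero (by omega) h0 h1)
  · -- w0 = 0, w1 = v  : v = e_{k-1}, a = e_k
    right
    have hzero : ∀ m (hm : m < k), a ⟨m, by omega⟩ = 0 := by
      intro m hm
      have := congrFun h0 ⟨m, hm⟩
      simpa [w0, Fin.castSucc, Fin.castAdd, Fin.castLE] using this
    have hvc : ∀ c : Fin k, v c = a ⟨c.val + 1, by omega⟩ := by
      intro c
      have := congrFun h1 c
      simp only [w1] at this
      rw [← this]; rfl
    have hlastcases := zmod2_cases (a ⟨k, by omega⟩)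
    rcases hlastcases with hl | hl
    · exfalso; apply hv
      funext c
      rw [hvc c]
      by_cases hck : c.val + 1 < k
      · exact hzero _ hck
      · have : c.val + 1 = k := by have := c.isLt; omega
        have he : (⟨c.val + 1, by omega⟩ : Fin (k+1)) = ⟨k, by omega⟩ := Fin.ext this
        rw [he, hl]; rfl
    · refine ⟨2, ?_, ?_⟩
      · funext c
        have hc := c.isLt
        rw [hvc c]
        rw [vW_two_apply]
        by_cases hck : c.val + 1 < k
        · rw [hzero _ hck, if_neg (by omega)]
        · have hce : c.val + 1 = k := by omega
          have he : (⟨c.val + 1, by omega⟩ : Fin (k+1)) = ⟨k, by omega⟩ := Fin.ext hce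
          rw [he, hl, if_pos (by omega)]
      · funext i
        have hik := i.isLt
        rw [aW_two_apply]
        by_cases hi : i.val < k
        · rw [if_neg (by omega)]
          have := hzero i.val hi
          rw [show (⟨i.val, by omega⟩ : Fin (k+1)) = i from Fin.ext rfl] at this
          exact this
        · have : i.val = k := by omega
          rw [if_pos this]
          have he : (⟨k, by omega⟩ : Fin (k+1)) = i := Fin.ext this.symm
          rw [← he, hl]
  · -- w0 = v, w1 = 0 : v = e_0, a = e_0
    right
    have hzero : ∀ m (hm : 1 ≤ m) (hm' : m ≤ k), a ⟨m, by omega⟩ = 0 := by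
      intro m hm hm'
      have := congrFun h1 ⟨m - 1, by omega⟩
      simp only [w1] at this
      have he : (⟨m - 1, by omega⟩ : Fin k).succ = ⟨m, by omega⟩ :=
        Fin.ext (by simp [Fin.val_succ]; omega)
      rw [he] at this
      simpa using this
    have hvc : ∀ c : Fin k, v c = a ⟨c.val, by omega⟩ := by
      intro c
      have := congrFun h0 c
      simp only [w0] at this
      rw [← this]; rfl
    rcases zmod2_cases (a ⟨0, by omega⟩) with hl | hl
    · exfalso; apply hv
      funext c
      rw [hvc c]
      by_cases hc0 : c.val = 0
      · rw [show (⟨c.val, by omega⟩ : Fin (k+1)) = ⟨0, by omega⟩ from Fin.ext hc0, hl]; rfl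
      · rw [hzero c.val (by omega) (by have := c.isLt; omega)]; rfl
    · refine ⟨1, ?_, ?_⟩
      · funext c
        rw [hvc c]
        rw [vW_one_apply]
        by_cases hc0 : c.val = 0
        · rw [show (⟨c.val, by omega⟩ : Fin (k+1)) = ⟨0, by omega⟩ from Fin.ext hc0, hl,
            if_pos hc0]
        · rw [hzero c.val (by omega) (by have := c.isLt; omega), if_neg hc0]
      · funext i
        have hik := i.isLt
        rw [aW_one_apply]
        by_cases hi0 : i.val = 0
        · rw [if_pos hi0]
          have he : (⟨0, by omega⟩ : Fin (k+1)) = i := Fin.ext hi0.symm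
          rw [← he, hl]
        · rw [if_neg hi0]
          have := hzero i.val (by omega) (by omega)
          rw [show (⟨i.val, by omega⟩ : Fin (k+1)) = i from Fin.ext rfl] at this
          exact this
  · -- w0 = v, w1 = v : v = 1, a = 1
    right
    have hvc0 : ∀ c : Fin k, v c = a ⟨c.val, by omega⟩ := by
      intro c
      have := congrFun h0 c
      simp only [w0] at this
      rw [← this]; rfl
    have hvc1 : ∀ c : Fin k, v c = a ⟨c.val + 1, by omega⟩ := by
      intro c
      have := congrFun h1 c
      simp only [w1] at this
      rw [← this]; rfl
    have hconst : ∀ m (hm : m < k), v ⟨m, hm⟩ = v ⟨0, by omega⟩ := by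
      intro m
      induction m with
      | zero => intro hm; rfl
      | succ n ih =>
        intro hm
        have h1n : v ⟨n + 1, hm⟩ = v ⟨n, by omega⟩ := by
          rw [hvc0 ⟨n + 1, hm⟩, hvc1 ⟨n, by omega⟩]
        rw [h1n, ih (by omega)]
    rcases zmod2_cases (v ⟨0, by omega⟩) with hl | hl
    · exfalso; apply hv
      funext c
      have : v c = v ⟨c.val, c.isLt⟩ := rfl
      rw [this, hconst c.val c.isLt, hl]; rfl
    · refine ⟨0, ?_, ?_⟩
      · funext c
        have : v c = v ⟨c.val, c.isLt⟩ := rfl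
        rw [this, hconst c.val c.isLt, hl]; rfl
      · funext i
        have hik := i.isLt
        rw [aW_zero_apply]
        by_cases hi : i.val < k
        · have := hvc0 ⟨i.val, hi⟩
          rw [show (⟨i.val, by omega⟩ : Fin (k+1)) = i from Fin.ext rfl] at this
          rw [← this, hconst i.val hi, hl]
        · have hie : i.val = k := by omega
          have := hvc1 ⟨k - 1, by omega⟩
          have he : (⟨k - 1 + 1, by omega⟩ : Fin (k+1)) = i :=
            Fin.ext (show k - 1 + 1 = i.val by omega)
          rw [he] at this
          rw [← this, hconst (k-1) (by omega), hl]

/-- Rank-one characterization over `F₂`. -/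
lemma rank_one_iff {m n : ℕ} (M : Matrix (Fin m) (Fin n) (ZMod 2)) :
    M.rank = 1 ↔ ∃ v : Fin n → ZMod 2,
      v ≠ 0 ∧ (∀ i, M i = 0 ∨ M i = v) ∧ ∃ i, M i ≠ 0 := by
  rw [Matrix.rank_eq_finrank_span_row]
  constructor
  · intro h
    obtain ⟨v, hv0, hv⟩ := finrank_eq_one_iff'.mp h
    refine ⟨v.val, fun hz => hv0 (Subtype.ext hz), ?_, ?_⟩
    · intro i
      obtain ⟨c, hc⟩ := hv ⟨M i, Submodule.subset_span ⟨i, rfl⟩⟩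
      have hc' : c • (v : Fin n → ZMod 2) = M i := by
        have := Subtype.ext_iff.mp hc
        simpa using this
      rcases zmod2_cases c with rfl | rfl
      · left; rw [← hc', zero_smul]
      · right; rw [← hc', one_smul]
    · by_contra hall
      push_neg at hall
      have hbot : Submodule.span (ZMod 2) (Set.range M) = ⊥ := by
        rw [Submodule.span_eq_bot]
        rintro x ⟨i, rfl⟩
        exact hall i
      have hm : (v : Fin n → ZMod 2) ∈ (⊥ : Submodule (ZMod 2) (Fin n → ZMod 2)) :=
        hbot.le v.2
      exact hv0 (Subtype.ext ((Submodule.mem_bot _).mp hm))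
  · rintro ⟨v, hv, hrows, i0, hi0⟩
    have hMi0 : M i0 = v := (hrows i0).resolve_left hi0
    have hspan : Submodule.span (ZMod 2) (Set.range M) = Submodule.span (ZMod 2) {v} := by
      apply le_antisymm
      · rw [Submodule.span_le]
        rintro x ⟨i, rfl⟩
        rcases hrows i with h | h
        · rw [h]; exact Submodule.zero_mem _
        · rw [h]; exact Submodule.subset_span rfl
      · rw [Submodule.span_le, Set.singleton_subset_iff]
        exact Submodule.subset_span ⟨i0, hMi0⟩
    rw [show Set.range M.row = Set.range M from rfl, hspan, finrank_span_singleton hv]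

section Rows

variable {k : ℕ} (α : Fin 5 → Fin (k+1) → ZMod 2)

lemma apply2_congr {i i' : Fin 5} {c c' : Fin (k+1)}
    (h1 : i.val = i'.val) (h2 : c.val = c'.val) : α i c = α i' c' := by
  have e1 : i = i' := Fin.ext h1
  have e2 : c = c' := Fin.ext h2
  rw [e1, e2]

lemma row_even (j : Fin 5) :
    persMat 5 k α ⟨2 * j.val, by have := j.isLt; omega⟩ = w0 k (α j) := by
  funext c
  exact apply2_congr α (show 2 * j.val / 2 = j.val by omega)
    (show c.val + 2 * j.val % 2 = c.val by omega)

lemma row_odd (j : Fin 5) :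
    persMat 5 k α ⟨2 * j.val + 1, by have := j.isLt; omega⟩ = w1 k (α j) := by
  funext c
  exact apply2_congr α (show (2 * j.val + 1) / 2 = j.val by omega)
    (show c.val + (2 * j.val + 1) % 2 = c.val + 1 by omega)

lemma row_arb (i : Fin (2 * 5)) :
    persMat 5 k α i = w0 k (α ⟨i.val / 2, by have := i.isLt; omega⟩) ∨
    persMat 5 k α i = w1 k (α ⟨i.val / 2, by have := i.isLt; omega⟩) := by
  have hi := i.isLt
  rcases Nat.mod_two_eq_zero_or_one i.val with h | h
  · left
    funext c
    exact apply2_congr α rfl (show c.val + i.val % 2 = c.val by omega)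
  · right
    funext c
    exact apply2_congr α rfl (show c.val + i.val % 2 = c.val + 1 by omega)

/-- The main characterization. -/
lemma char (hk : 2 ≤ k) :
    (persMat 5 k α).rank = 1 ↔
      ∃ t : Fin 3, (∀ j, α j = 0 ∨ α j = aW k t) ∧ α ≠ 0 := by
  rw [rank_one_iff]
  constructor
  · rintro ⟨v, hv, hrows, i0, hi0⟩
    have hclass : ∀ j : Fin 5, α j = 0 ∨ ∃ t, v = vW k t ∧ α j = aW k t := by
      intro j
      have h0 := hrows ⟨2 * j.val, by have := j.isLt; omega⟩
      have h1 := hrows ⟨2 * j.val + 1, by have := j.isLt; omega⟩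
      rw [row_even] at h0
      rw [row_odd] at h1
      exact classify hk hv h0 h1
    have hane : α ≠ 0 := by
      intro h
      apply hi0
      rcases row_arb α i0 with he | he <;> rw [he, h] <;> rfl
    obtain ⟨j0, hj0⟩ : ∃ j0, α j0 ≠ 0 := by
      by_contra hc
      push_neg at hc
      exact hane (funext fun j => by rw [hc j]; rfl)
    obtain ⟨t0, hvt0, hat0⟩ := (hclass j0).resolve_left hj0
    refine ⟨t0, fun j => ?_, hane⟩
    rcases hclass j with h | ⟨t, hvt, hat⟩
    · exact Or.inl h
    · right
      have : t = t0 := vW_inj hk (hvt.symm.trans hvt0)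
      rw [hat, this]
  · rintro ⟨t, hall, hane⟩
    refine ⟨vW k t, vW_ne_zero (by omega) t, ?_, ?_⟩
    · intro i
      rcases row_arb α i with he | he <;> rw [he] <;>
        rcases hall ⟨i.val / 2, by have := i.isLt; omega⟩ with h | h <;> rw [h]
      · left; rfl
      · fin_cases t
        · right; exact w0_aW0
        · right; exact w0_aW1
        · left; exact w0_aW2
      · left; rfl
      · fin_cases t
        · right; exact w1_aW0
        · left; exact w1_aW1
        · right; exact w1_aW2 (by omega)
    · obtain ⟨j0, hj0⟩ : ∃ j0, α j0 ≠ 0 := by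
        by_contra hc
        push_neg at hc
        exact hane (funext fun j => by rw [hc j]; rfl)
      by_contra hz
      push_neg at hz
      apply hj0
      have h0 := hz ⟨2 * j0.val, by have := j0.isLt; omega⟩
      have h1 := hz ⟨2 * j0.val + 1, by have := j0.isLt; omega⟩
      rw [row_even] at h0
      rw [row_odd] at h1
      exact window_zero (by omega) h0 h1

end Rows

end G5Aux

open G5Aux in
theorem gamma5_rank_one (k : ℕ) (hk : 2 ≤ k) : Gamma 5 k 1 = 93 := by
  classical
  unfold Gamma
  have hchar := fun α => char α hk
  -- the parameter space
  let T := Fin 3 × {s : Fin 5 → Bool // s ≠ fun _ => false}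
  have hsjex : ∀ s : {s : Fin 5 → Bool // s ≠ fun _ => false}, ∃ j, s.val j = true := by
    intro s
    by_contra hc
    push_neg at hc
    exact s.2 (funext fun j => by simpa using hc j)
  let g : T → {α : Fin 5 → Fin (k+1) → ZMod 2 // (persMat 5 k α).rank = 1} := fun p =>
    ⟨fun j => if p.2.val j then aW k p.1 else 0, by
      rw [hchar]
      refine ⟨p.1, fun j => ?_, ?_⟩
      · by_cases h : p.2.val j = true <;> simp [h]
      · obtain ⟨j, hj⟩ := hsjex p.2
        intro h
        have := congrFun h j
        simp only [hj, if_true] at this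
        exact aW_ne_zero p.1 (by rw [this]; rfl)⟩
  have hg : Function.Bijective g := by
    constructor
    · rintro ⟨t, s⟩ ⟨t', s'⟩ h
      have h' := congrArg Subtype.val h
      simp only [g] at h'
      obtain ⟨j, hj⟩ := hsjex s
      have htt' : t = t' := by
        have := congrFun h' j
        simp only [hj, if_true] at this
        by_cases h2 : s'.val j = true
        · rw [h2, if_pos rfl] at this
          exact aW_inj hk this
        · simp only [h2, Bool.false_eq_true, if_false] at this
          exact absurd this (aW_ne_zero t)
      have hss' : s = s' := by
        apply Subtype.ext
        funext j'
        have hcj := congrFun h' j'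
        cases hb : s.val j' <;> cases hb' : s'.val j'
        · rfl
        · rw [hb, hb'] at hcj
          simp only [Bool.false_eq_true, if_false, if_pos] at hcj
          exact absurd hcj.symm (aW_ne_zero t')
        · rw [hb, hb'] at hcj
          simp only [Bool.false_eq_true, if_false, if_pos] at hcj
          exact absurd hcj (aW_ne_zero t)
        · rfl
      rw [Prod.ext_iff]
      exact ⟨htt', hss'⟩
    · rintro ⟨α, hα⟩
      rw [hchar] at hα
      obtain ⟨t, hall, hane⟩ := hα
      refine ⟨⟨t, ⟨fun j => if α j = 0 then false else true, ?_⟩⟩, ?_⟩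
      · intro hc
        obtain ⟨j0, hj0⟩ : ∃ j0, α j0 ≠ 0 := by
          by_contra hc2
          push_neg at hc2
          exact hane (funext fun j => by rw [hc2 j]; rfl)
        have := congrFun hc j0
        simp only [if_neg hj0] at this
        simp at this
      · apply Subtype.ext
        funext j
        simp only [g]
        by_cases h : α j = 0
        · simp [h]
        · simp only [h, if_false, if_true]
          exact ((hall j).resolve_left h).symm
  have hcard : Nat.card {α : Fin 5 → Fin (k+1) → ZMod 2 // (persMat 5 k α).rank = 1}
      = Nat.card T := Nat.card_congr (Equiv.ofBijective g hg).symm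
  rw [hcard]
  rw [Nat.card_eq_fintype_card]
  decide
end
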